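/- Let X₁, X₂, X₃ be measurable spaces equipped with probability measures μ₁, μ₂, μ₃, and let c : X₁ × X₂ × X₃ → ℝ be measurable. Let μ be a probability measure on X₁ × X₂ × X₃ whose pushforwards under the three coordinate projections are μ₁, μ₂, μ₃ and such that c is μ-integrable. Let f₁, f₂, f₃ be functions with fᵢ integrable with respect to μᵢ, satisfying f₁(x₁)+f₂(x₂)+f₃(x₃) ≤ c(x₁,x₂,x₃) for all (x₁,x₂,x₃). Suppose there is a measurable set M ⊆ X₁ × X₂ × X₃ with μ(M)=1 such that f₁(x₁)+f₂(x₂)+f₃(x₃) = c(x₁,x₂,x₃) for all (x₁,x₂,x₃) ∈ M. Then: (i) for every probability measure ν on X₁ × X₂ × X₃ with the same three coordinate marginals μ₁, μ₂, μ₃ for which c is ν-integrable, ∫ c dμ ≤ ∫ c dν; and (ii) for every triple of functions g₁, g₂, g₃ with gᵢ integrable with respect to μᵢ and g₁(x₁)+g₂(x₂)+g₃(x₃) ≤ c(x₁,x₂,x₃) for all points, one has ∫ g₁ dμ₁ + ∫ g₂ dμ₂ + ∫ g₃ dμ₃ ≤ ∫ f₁ dμ₁ + ∫ f₂ dμ₂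 + ∫ f₃ dμ₃. -/
import Mathlib


open MeasureTheory

/-- For a plan `π` with prescribed marginals, the integral of a sum of single-variable
integrable functions splits into the marginal integrals. -/
lemma sum_integral_marginals
    {X₁ X₂ X₃ : Type*} [MeasurableSpace X₁] [MeasurableSpace X₂] [MeasurableSpace X₃]
    (μ₁ : Measure X₁) (μ₂ : Measure X₂) (μ₃ : Measure X₃)
    (π : Measure (X₁ × X₂ × X₃))
    (h1 : π.map (fun p => p.1) = μ₁)
    (h2 : π.map (fun p => p.2.1) = μ₂)
    (h3 : π.map (fun p => p.2.2) = μ₃)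
    (f₁ : X₁ → ℝ) (f₂ : X₂ → ℝ) (f₃ : X₃ → ℝ)
    (hf₁ : Integrable f₁ μ₁) (hf₂ : Integrable f₂ μ₂) (hf₃ : Integrable f₃ μ₃) :
    Integrable (fun p : X₁ × X₂ × X₃ => f₁ p.1 + f₂ p.2.1 + f₃ p.2.2) π ∧
    ∫ p : X₁ × X₂ × X₃, (f₁ p.1 + f₂ p.2.1 + f₃ p.2.2) ∂π
      = (∫ x, f₁ x ∂μ₁) + (∫ x, f₂ x ∂μ₂) + (∫ x, f₃ x ∂μ₃) := by
  have m1 : Measurable (fun p : X₁ × X₂ × X₃ => p.1) := measurable_fst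
  have m2 : Measurable (fun p : X₁ × X₂ × X₃ => p.2.1) := measurable_fst.comp measurable_snd
  have m3 : Measurable (fun p : X₁ × X₂ × X₃ => p.2.2) := measurable_snd.comp measurable_snd
  have i1 : Integrable (fun p : X₁ × X₂ × X₃ => f₁ p.1) π := by
    have := (integrable_map_measure (g := f₁) (by rw [h1]; exact hf₁.aestronglyMeasurable)
      m1.aemeasurable).mp (by rw [h1]; exact hf₁)
    exact this
  have i2 : Integrable (fun p : X₁ × X₂ × X₃ => f₂ p.2.1) π := by
    have := (integrable_map_measure (g := f₂) (by rw [h2]; exact hf₂.aestronglyMeasurable)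
      m2.aemeasurable).mp (by rw [h2]; exact hf₂)
    exact this
  have i3 : Integrable (fun p : X₁ × X₂ × X₃ => f₃ p.2.2) π := by
    have := (integrable_map_measure (g := f₃) (by rw [h3]; exact hf₃.aestronglyMeasurable)
      m3.aemeasurable).mp (by rw [h3]; exact hf₃)
    exact this
  have i12 : Integrable (fun p : X₁ × X₂ × X₃ => f₁ p.1 + f₂ p.2.1) π := i1.add i2
  refine ⟨i12.add i3, ?_⟩
  rw [integral_add i12 i3, integral_add i1 i2]
  have e1 : ∫ p : X₁ × X₂ × X₃, f₁ p.1 ∂π = ∫ x, f₁ x ∂μ₁ := by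
    rw [← h1, integral_map m1.aemeasurable (by rw [h1]; exact hf₁.aestronglyMeasurable)]
  have e2 : ∫ p : X₁ × X₂ × X₃, f₂ p.2.1 ∂π = ∫ x, f₂ x ∂μ₂ := by
    rw [← h2, integral_map m2.aemeasurable (by rw [h2]; exact hf₂.aestronglyMeasurable)]
  have e3 : ∫ p : X₁ × X₂ × X₃, f₃ p.2.2 ∂π = ∫ x, f₃ x ∂μ₃ := by
    rw [← h3, integral_map m3.aemeasurable (by rw [h3]; exact hf₃.aestronglyMeasurable)]
  rw [e1, e2, e3]


/-- Complementary slackness for the three-marginal Monge–Kantorovich problem: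
a feasible plan `μ` and a feasible dual triple `(f₁, f₂, f₃)` that agree on a set of full
`μ`-measure are optimal for the primal and dual problems respectively. -/
theorem complementary_slackness
    {X₁ X₂ X₃ : Type*} [MeasurableSpace X₁] [MeasurableSpace X₂] [MeasurableSpace X₃]
    (μ₁ : Measure X₁) (μ₂ : Measure X₂) (μ₃ : Measure X₃)
    [IsProbabilityMeasure μ₁] [IsProbabilityMeasure μ₂] [IsProbabilityMeasure μ₃]
    (c : X₁ × X₂ × X₃ → ℝ) (hc : Measurable c)
    (μ : Measure (X₁ × X₂ × X₃)) [IsProbabilityMeasure μ]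
    (hμ1 : μ.map (fun p => p.1) = μ₁)
    (hμ2 : μ.map (fun p => p.2.1) = μ₂)
    (hμ3 : μ.map (fun p => p.2.2) = μ₃)
    (hcμ : Integrable c μ)
    (f₁ : X₁ → ℝ) (f₂ : X₂ → ℝ) (f₃ : X₃ → ℝ)
    (hf₁ : Integrable f₁ μ₁) (hf₂ : Integrable f₂ μ₂) (hf₃ : Integrable f₃ μ₃)
    (hle : ∀ x₁ x₂ x₃, f₁ x₁ + f₂ x₂ + f₃ x₃ ≤ c (x₁, x₂, x₃))
    (M : Set (X₁ × X₂ × X₃)) (hM : MeasurableSet M) (hμM : μ M = 1)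
    (heq : ∀ p ∈ M, f₁ p.1 + f₂ p.2.1 + f₃ p.2.2 = c p) :
    (∀ ν : Measure (X₁ × X₂ × X₃), IsProbabilityMeasure ν →
      ν.map (fun p => p.1) = μ₁ → ν.map (fun p => p.2.1) = μ₂ →
      ν.map (fun p => p.2.2) = μ₃ → Integrable c ν →
      ∫ p, c p ∂μ ≤ ∫ p, c p ∂ν) ∧
    (∀ (g₁ : X₁ → ℝ) (g₂ : X₂ → ℝ) (g₃ : X₃ → ℝ),
      Integrable g₁ μ₁ → Integrable g₂ μ₂ → Integrable g₃ μ₃ →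
      (∀ x₁ x₂ x₃, g₁ x₁ + g₂ x₂ + g₃ x₃ ≤ c (x₁, x₂, x₃)) →
      (∫ x, g₁ x ∂μ₁) + (∫ x, g₂ x ∂μ₂) + (∫ x, g₃ x ∂μ₃) ≤
        (∫ x, f₁ x ∂μ₁) + (∫ x, f₂ x ∂μ₂) + (∫ x, f₃ x ∂μ₃)) := by
  have key := sum_integral_marginals μ₁ μ₂ μ₃ μ hμ1 hμ2 hμ3 f₁ f₂ f₃ hf₁ hf₂ hf₃
  have hMc : μ Mᶜ = 0 := by
    rw [measure_compl hM (measure_ne_top _ _), hμM, measure_univ]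
    simp
  have hae : (fun p : X₁ × X₂ × X₃ => f₁ p.1 + f₂ p.2.1 + f₃ p.2.2) =ᵐ[μ] c := by
    filter_upwards [measure_eq_zero_iff_ae_notMem.mp hMc] with p hp
    exact heq p (not_not.mp hp)
  have hcμeq : ∫ p, c p ∂μ = (∫ x, f₁ x ∂μ₁) + (∫ x, f₂ x ∂μ₂) + (∫ x, f₃ x ∂μ₃) := by
    rw [← integral_congr_ae hae, key.2]
  constructor
  · intro ν _ hν1 hν2 hν3 hcν
    have keyν := sum_integral_marginals μ₁ μ₂ μ₃ ν hν1 hν2 hν3 f₁ f₂ f₃ hf₁ hf₂ hf₃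
    rw [hcμeq, ← keyν.2]
    exact integral_mono keyν.1 hcν (fun p => hle p.1 p.2.1 p.2.2)
  · intro g₁ g₂ g₃ hg₁ hg₂ hg₃ hgle
    have keyg := sum_integral_marginals μ₁ μ₂ μ₃ μ hμ1 hμ2 hμ3 g₁ g₂ g₃ hg₁ hg₂ hg₃
    rw [← hcμeq, ← keyg.2]
    exact integral_mono keyg.1 hcμ (fun p => hgle p.1 p.2.1 p.2.2)
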